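/- Let N ≥ 3, let τ_1, …, τ_N be the N roots of the Lobatto polynomial L_N, let τ_ξ ∈ [−1, 1] be distinct from all of them, and for k ∈ {1, …, N} let l_k be the Lagrange basis polynomial of index k over the N+1 nodes τ_1, …, τ_N, τ_ξ. Let w_k = 2/(N(N−1)·P_{N−1}(τ_k)²) be the Gauss–Lobatto quadrature weights. Then for every real polynomial p of degree at most N − 3 and every k ∈ {1, …, N}, ∫_{−1}^{1} l_k(τ)·p(τ) dτ = w_k·p(τ_k). -/

import Mathlib

open Polynomial

/-- Legendre polynomial of degree `n`, via Rodrigues' formula (normalized so `P_n(1) = 1`). -/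
noncomputable def legendreP (n : ℕ) : Polynomial ℝ :=
  Polynomial.C ((2 ^ n * n.factorial : ℝ)⁻¹) * (⇑Polynomial.derivative)^[n] ((X ^ 2 - 1) ^ n)



lemma poly_ftc (f : ℝ[X]) (a b : ℝ) :
    ∫ t in a..b, (derivative f).eval t = f.eval b - f.eval a := by
  apply intervalIntegral.integral_deriv_eq_sub'
  · funext x; exact Polynomial.deriv f
  · exact fun x _ => f.differentiable.differentiableAt
  · exact ((derivative f).continuous_aeval).continuousOn

lemma poly_intble (f : ℝ[X]) (a b : ℝ) :
    IntervalIntegrable (fun t => f.eval t) MeasureTheory.volume a b :=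
  (f.continuous_aeval).intervalIntegrable a b

lemma poly_int_mul (f g : ℝ[X]) (a b : ℝ) :
    ∫ t in a..b, f.eval t * g.eval t = ∫ t in a..b, (f * g).eval t := by
  simp [eval_mul]

lemma poly_int_add (f g : ℝ[X]) (a b : ℝ) :
    ∫ t in a..b, (f + g).eval t = (∫ t in a..b, f.eval t) + ∫ t in a..b, g.eval t := by
  simp only [eval_add]
  exact intervalIntegral.integral_add (poly_intble f a b) (poly_intble g a b)

lemma poly_int_C_mul (c : ℝ) (f : ℝ[X]) (a b : ℝ) :
    ∫ t in a..b, (C c * f).eval t = c * ∫ t in a..b, f.eval t := by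
  simp only [eval_mul, eval_C]
  exact intervalIntegral.integral_const_mul c _

-- integration by parts for polynomials
lemma poly_ibp (f g : ℝ[X]) (a b : ℝ) :
    ∫ t in a..b, ((derivative f) * g).eval t
      = f.eval b * g.eval b - f.eval a * g.eval a - ∫ t in a..b, (f * derivative g).eval t := by
  have h := poly_ftc (f * g) a b
  rw [derivative_mul, poly_int_add] at h
  simp only [eval_mul] at h ⊢
  linarith


lemma iter_deriv_X_mul (m : ℕ) (f : ℝ[X]) :
    derivative^[m+1] (X * f) = X * derivative^[m+1] f + C ((m:ℝ)+1) * derivative^[m] f := by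
  induction m with
  | zero => simp [derivative_mul]; ring
  | succ m ih =>
    rw [Function.iterate_succ_apply', ih]
    rw [Function.iterate_succ_apply' derivative (m+1), Function.iterate_succ_apply' derivative m]
    simp only [derivative_add, derivative_mul, derivative_X, derivative_C]
    push_cast
    simp only [map_add, map_mul, map_one, map_ofNat, map_zero, derivative_zero]
    ring

lemma iter_deriv_X2_mul (m : ℕ) (f : ℝ[X]) :
    derivative^[m+2] ((X^2-1) * f) = (X^2-1) * derivative^[m+2] f
      + C (2*((m:ℝ)+2)) * X * derivative^[m+1] f + C (((m:ℝ)+2)*((m:ℝ)+1)) * derivative^[m] f := by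
  induction m with
  | zero =>
    show derivative (derivative ((X^2-1)*f)) = _
    simp only [derivative_mul, derivative_add, derivative_sub, derivative_one, derivative_pow,
      derivative_X, Function.iterate_succ_apply, Function.iterate_zero_apply, derivative_C]
    push_cast
    simp only [map_add, map_mul, map_one, map_ofNat, map_zero, derivative_zero]
    ring
  | succ m ih =>
    rw [Function.iterate_succ_apply', ih]
    rw [Function.iterate_succ_apply' derivative (m+2), Function.iterate_succ_apply' derivative (m+1),
      Function.iterate_succ_apply' derivative m]
    simp only [derivative_add, derivative_mul, derivative_X, derivative_C, derivative_sub,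
      derivative_one, derivative_pow, derivative_X]
    push_cast
    simp only [map_add, map_mul, map_one, map_ofNat, map_zero, derivative_zero]
    ring


lemma coeff_fact (m : ℕ) : ((2^(m+2) * (m+2).factorial : ℝ))⁻¹ * (2*((m:ℝ)+2)) = ((2^(m+1) * (m+1).factorial : ℝ))⁻¹ := by
  rw [Nat.factorial_succ (m+1)]
  push_cast
  have h1 : ((m+1).factorial : ℝ) ≠ 0 := Nat.cast_ne_zero.2 (Nat.factorial_ne_zero _)
  have h2 : (2:ℝ)^(m+1) ≠ 0 := by positivity
  field_simp
  ring

-- Bonnet aux (†): P_{m+2} = X·P_{m+1} + C((m+1)·c_{m+1})·D^m u_{m+1}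
lemma bonnet_aux (m : ℕ) :
    legendreP (m+2) = X * legendreP (m+1)
      + C (((m:ℝ)+1) * ((2^(m+1) * (m+1).factorial : ℝ))⁻¹) * derivative^[m] ((X^2-1)^(m+1)) := by
  have h1 : derivative ((X^2-1 : ℝ[X])^(m+2)) = C (2*((m:ℝ)+2)) * (X * (X^2-1)^(m+1)) := by
    rw [derivative_pow]
    simp only [derivative_sub, derivative_pow, derivative_one, derivative_X]
    push_cast
    simp only [map_add, map_mul, map_ofNat, map_one]
    ring
  have h2 : (derivative^[m+2] ((X^2-1 : ℝ[X])^(m+2)))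
      = C (2*((m:ℝ)+2)) * derivative^[m+1] (X * (X^2-1)^(m+1)) := by
    rw [Function.iterate_succ_apply, h1, Polynomial.iterate_derivative_C_mul]
  unfold legendreP
  rw [h2, iter_deriv_X_mul]
  have hC : (C ((2^(m+2) * ((m+2).factorial:ℝ)))⁻¹ : ℝ[X]) * C (2*((m:ℝ)+2))
      = C ((2^(m+1) * ((m+1).factorial:ℝ))⁻¹) := by
    rw [← C_mul, coeff_fact]
  simp only [C_mul] at hC ⊢
  linear_combination (X * derivative^[m+1] ((X^2-1 : ℝ[X])^(m+1))
    + C ((m:ℝ)+1) * derivative^[m] ((X^2-1 : ℝ[X])^(m+1))) * hC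


lemma legendreP_zero : legendreP 0 = 1 := by simp [legendreP]

lemma legendreP_one : legendreP 1 = X := by
  unfold legendreP
  simp only [pow_one, Nat.factorial_one, mul_one, Function.iterate_one, derivative_sub,
    derivative_one, derivative_pow, derivative_X, sub_zero]
  norm_num
  rw [← mul_assoc, ← C_mul]
  norm_num

-- (‡): P'_{n+1} = X P'_n + (n+1) P_n
lemma deriv_rec (n : ℕ) :
    derivative (legendreP (n+1)) = X * derivative (legendreP n) + C ((n:ℝ)+1) * legendreP n := by
  cases n with
  | zero =>
    rw [legendreP_one, legendreP_zero]
    simp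
  | succ m =>
    show derivative (legendreP (m+2)) = X * derivative (legendreP (m+1)) + C ((↑(m+1):ℝ)+1) * legendreP (m+1)
    have hcast : ((m+1:ℕ):ℝ) + 1 = (m:ℝ)+2 := by push_cast; ring
    rw [hcast, bonnet_aux m]
    simp only [derivative_add, derivative_mul, derivative_X, one_mul, derivative_C_mul,
      derivative_C, zero_mul, add_zero]
    rw [show derivative (derivative^[m] ((X^2-1 : ℝ[X])^(m+1))) = derivative^[m+1] ((X^2-1 : ℝ[X])^(m+1)) from (Function.iterate_succ_apply' derivative m _).symm]
    have h5 : (C (((m:ℝ)+1) * ((2^(m+1) * (m+1).factorial : ℝ))⁻¹) : ℝ[X]) * derivative^[m+1] ((X^2-1:ℝ[X])^(m+1))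
        = C ((m:ℝ)+1) * legendreP (m+1) := by
      unfold legendreP
      rw [C_mul]; ring
    rw [h5]
    simp only [map_add, map_ofNat, map_one]
    ring

-- (★): (X²−1) P'_n = (n+1)(P_{n+1} − X P_n)
lemma legendre_star (n : ℕ) :
    (X^2-1) * derivative (legendreP n) = C ((n:ℝ)+1) * (legendreP (n+1) - X * legendreP n) := by
  cases n with
  | zero =>
    rw [legendreP_one, legendreP_zero]
    simp
  | succ m =>
    show (X^2-1) * derivative (legendreP (m+1)) = C ((↑(m+1):ℝ)+1) * (legendreP (m+2) - X * legendreP (m+1))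
    have hcast : ((m+1:ℕ):ℝ) + 1 = (m:ℝ)+2 := by push_cast; ring
    rw [hcast]
    have h1 : legendreP (m+2) = C ((2^(m+2) * ((m+2).factorial:ℝ)))⁻¹ *
        ((X^2-1) * derivative^[m+2] ((X^2-1:ℝ[X])^(m+1))
          + C (2*((m:ℝ)+2)) * X * derivative^[m+1] ((X^2-1:ℝ[X])^(m+1))
          + C (((m:ℝ)+2)*((m:ℝ)+1)) * derivative^[m] ((X^2-1:ℝ[X])^(m+1))) := by
      unfold legendreP
      rw [show ((X^2-1:ℝ[X])^(m+2)) = (X^2-1) * (X^2-1:ℝ[X])^(m+1) from by ring,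
        iter_deriv_X2_mul]
    have h4 : legendreP (m+2) = X * (C ((2^(m+1) * ((m+1).factorial:ℝ)))⁻¹ * derivative^[m+1] ((X^2-1:ℝ[X])^(m+1)))
        + C (((m:ℝ)+1) * ((2^(m+1) * (m+1).factorial : ℝ))⁻¹) * derivative^[m] ((X^2-1:ℝ[X])^(m+1)) := bonnet_aux m
    have h14 := h1.symm.trans h4
    have h2 : derivative (legendreP (m+1))
        = C ((2^(m+1) * ((m+1).factorial:ℝ)))⁻¹ * derivative^[m+2] ((X^2-1:ℝ[X])^(m+1)) := by
      unfold legendreP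
      rw [derivative_C_mul, ← Function.iterate_succ_apply' derivative (m+1)]
    have h3 : legendreP (m+1)
        = C ((2^(m+1) * ((m+1).factorial:ℝ)))⁻¹ * derivative^[m+1] ((X^2-1:ℝ[X])^(m+1)) := rfl
    have hc : (C ((2^(m+2) * ((m+2).factorial:ℝ)))⁻¹ : ℝ[X]) * C (2*((m:ℝ)+2))
        = C ((2^(m+1) * ((m+1).factorial:ℝ))⁻¹) := by
      rw [← C_mul, coeff_fact]
    rw [h2, h4, h3]
    simp only [C_mul, map_add, map_ofNat, map_one] at h14 hc ⊢
    linear_combination (2*(C (m:ℝ) + 2)) * h14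
      - ((X^2-1) * derivative^[m+2] ((X^2-1:ℝ[X])^(m+1))
        + 2*(C (m:ℝ)+2) * X * derivative^[m+1] ((X^2-1:ℝ[X])^(m+1))
        + (C (m:ℝ)+2)*(C (m:ℝ)+1) * derivative^[m] ((X^2-1:ℝ[X])^(m+1))) * hc


lemma deriv_deg {p : ℝ[X]} (hd : p.natDegree ≠ 0) (hp : 0 < p.leadingCoeff) :
    (derivative p).natDegree = p.natDegree - 1 ∧ 0 < (derivative p).leadingCoeff := by
  obtain ⟨d, hd'⟩ : ∃ d, p.natDegree = d + 1 :=
    ⟨p.natDegree - 1, (Nat.succ_pred_eq_of_pos (Nat.pos_of_ne_zero hd)).symm⟩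
  have hc : (derivative p).coeff d = p.coeff (d+1) * ((d:ℝ)+1) := coeff_derivative p d
  have hlead : p.coeff (d+1) = p.leadingCoeff := by rw [← hd']; rfl
  have hpos : 0 < (derivative p).coeff d := by
    rw [hc, hlead]; positivity
  have hge : d ≤ (derivative p).natDegree := le_natDegree_of_ne_zero (ne_of_gt hpos)
  have hle : (derivative p).natDegree ≤ d := by
    have := natDegree_derivative_le p
    omega
  have hdeg : (derivative p).natDegree = d := le_antisymm hle hge
  refine ⟨by omega, ?_⟩
  rw [leadingCoeff, hdeg]
  exact hpos

lemma iter_deriv_deg (f : ℝ[X]) (hf : 0 < f.leadingCoeff) :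
    ∀ j, j ≤ f.natDegree → (derivative^[j] f).natDegree = f.natDegree - j
      ∧ 0 < (derivative^[j] f).leadingCoeff := by
  intro j
  induction j with
  | zero => exact fun _ => ⟨by simp, by simpa⟩
  | succ m ih =>
    intro hj
    obtain ⟨h1, h2⟩ := ih (by omega)
    rw [Function.iterate_succ_apply']
    have hd : (derivative^[m] f).natDegree ≠ 0 := by omega
    obtain ⟨h3, h4⟩ := deriv_deg hd h2
    exact ⟨by omega, h4⟩

lemma u_monic (n : ℕ) : ((X^2-1 : ℝ[X])^n).Monic := by
  apply Polynomial.Monic.pow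
  have : (X^2 - 1 : ℝ[X]) = X^2 - C 1 := by simp
  rw [this]
  exact monic_X_pow_sub_C 1 two_ne_zero

lemma u_natDegree (n : ℕ) : ((X^2-1 : ℝ[X])^n).natDegree = 2*n := by
  have h : (X^2 - 1 : ℝ[X]) = X^2 - C 1 := by simp
  rw [natDegree_pow, h, natDegree_X_pow_sub_C]
  ring

lemma iter_u_deg (n j : ℕ) (hj : j ≤ 2*n) :
    (derivative^[j] ((X^2-1 : ℝ[X])^n)).natDegree = 2*n - j
      ∧ 0 < (derivative^[j] ((X^2-1 : ℝ[X])^n)).leadingCoeff := by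
  have := iter_deriv_deg ((X^2-1 : ℝ[X])^n) (by rw [(u_monic n).leadingCoeff]; norm_num) j
    (by rw [u_natDegree]; omega)
  rwa [u_natDegree] at this

lemma cpos (n : ℕ) : (0:ℝ) < ((2 ^ n * n.factorial : ℝ))⁻¹ := by
  have : (0:ℝ) < (n.factorial : ℝ) := by exact_mod_cast Nat.factorial_pos n
  positivity

lemma legendreP_natDegree (n : ℕ) : (legendreP n).natDegree = n := by
  unfold legendreP
  obtain ⟨h1, h2⟩ := iter_u_deg n n (by omega)
  rw [natDegree_C_mul (ne_of_gt (cpos n)), h1]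
  omega

lemma legendreP_leadingCoeff_pos (n : ℕ) : 0 < (legendreP n).leadingCoeff := by
  unfold legendreP
  obtain ⟨h1, h2⟩ := iter_u_deg n n (by omega)
  rw [leadingCoeff_mul, leadingCoeff_C]
  exact mul_pos (cpos n) h2

lemma legendreP_ne_zero (n : ℕ) : legendreP n ≠ 0 := fun h => by
  have := legendreP_leadingCoeff_pos n
  rw [h] at this
  simp at this

lemma deriv_legendreP_natDegree {n : ℕ} (hn : 1 ≤ n) :
    (derivative (legendreP n)).natDegree = n - 1 ∧ derivative (legendreP n) ≠ 0 := by
  have h1 := legendreP_natDegree n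
  have h2 := legendreP_leadingCoeff_pos n
  obtain ⟨h3, h4⟩ := deriv_deg (by omega) h2
  refine ⟨by omega, fun h => ?_⟩
  rw [h] at h4
  simp at h4


lemma dvd_deriv {a : ℝ} {k : ℕ} {f : ℝ[X]} (h : (X - C a)^(k+1) ∣ f) :
    (X - C a)^k ∣ derivative f := by
  obtain ⟨g, rfl⟩ := h
  rw [derivative_mul, derivative_pow]
  simp only [derivative_sub, derivative_X, derivative_C, sub_zero, mul_one, Nat.add_sub_cancel]
  apply dvd_add
  · exact ⟨C ((k:ℝ)+1) * g, by push_cast; ring⟩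
  · exact ⟨(X - C a) * derivative g, by rw [pow_succ]; ring⟩

lemma dvd_iter (a : ℝ) (n : ℕ) (f : ℝ[X]) (h : (X - C a)^n ∣ f) :
    ∀ j, j ≤ n → (X - C a)^(n-j) ∣ derivative^[j] f := by
  intro j
  induction j with
  | zero => simpa using h
  | succ m ih =>
    intro hm
    rw [Function.iterate_succ_apply']
    have h2 := ih (by omega)
    have h3 : (X - C a)^((n - (m+1)) + 1) ∣ derivative^[m] f := by
      have : (n - (m+1)) + 1 ≤ n - m := by omega
      exact dvd_trans (pow_dvd_pow _ this) h2
    exact dvd_deriv h3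

lemma u_boundary (n j : ℕ) (hj : j < n) (s : ℝ) (hs : s = 1 ∨ s = -1) :
    (derivative^[j] ((X^2-1 : ℝ[X])^n)).eval s = 0 := by
  have hfac : (X^2 - 1 : ℝ[X]) = (X - C 1) * (X - C (-1)) := by
    simp only [map_neg, map_one]
    ring
  obtain ⟨c, hc, hdvd⟩ : ∃ c : ℝ, s = c ∧ ((X - C c)^n ∣ (X^2-1 : ℝ[X])^n) := by
    rcases hs with h | h
    · exact ⟨1, h, by rw [hfac, mul_pow]; exact Dvd.intro _ rfl⟩
    · exact ⟨-1, h, by rw [hfac, mul_pow]; exact Dvd.intro_left _ rfl⟩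
  rw [hc]
  have h2 := dvd_iter c n _ hdvd j (le_of_lt hj)
  have h3 : (X - C c) ∣ derivative^[j] ((X^2-1:ℝ[X])^n) :=
    dvd_trans (dvd_pow_self (X - C c) (by omega : n - j ≠ 0)) h2
  obtain ⟨g, hg⟩ := h3
  rw [hg, eval_mul]
  simp

lemma iter_ibp (n : ℕ) (q : ℝ[X]) : ∀ j, j ≤ n →
    (∫ t in (-1:ℝ)..1, (derivative^[n] ((X^2-1:ℝ[X])^n) * q).eval t)
      = (-1:ℝ)^j * ∫ t in (-1:ℝ)..1, (derivative^[n-j] ((X^2-1:ℝ[X])^n) * derivative^[j] q).eval t := by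
  intro j
  induction j with
  | zero => simp
  | succ m ih =>
    intro hm
    rw [ih (by omega)]
    have h1 : derivative^[n-m] ((X^2-1:ℝ[X])^n)
        = derivative (derivative^[n-(m+1)] ((X^2-1:ℝ[X])^n)) := by
      rw [← Function.iterate_succ_apply' derivative]
      congr 1
      omega
    rw [h1, poly_ibp]
    rw [u_boundary n (n-(m+1)) (by omega) 1 (Or.inl rfl),
        u_boundary n (n-(m+1)) (by omega) (-1) (Or.inr rfl)]
    rw [← Function.iterate_succ_apply' derivative m q]
    ring

lemma legendre_orth {n : ℕ} {q : ℝ[X]} (hq : q.natDegree < n) :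
    ∫ t in (-1:ℝ)..1, (legendreP n * q).eval t = 0 := by
  unfold legendreP
  rw [mul_assoc]
  have : ∫ t in (-1:ℝ)..1, (C ((2 ^ n * n.factorial : ℝ))⁻¹ * (derivative^[n] ((X^2-1:ℝ[X])^n) * q)).eval t
      = ((2 ^ n * n.factorial : ℝ))⁻¹ * ∫ t in (-1:ℝ)..1, ((derivative^[n] ((X^2-1:ℝ[X])^n)) * q).eval t := by
    simp only [eval_mul, eval_C]
    exact intervalIntegral.integral_const_mul _ _
  rw [show ((X:ℝ[X])^2-1)^n = ((X^2-1:ℝ[X]))^n from rfl] at this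
  rw [this, iter_ibp n q n le_rfl, Polynomial.iterate_derivative_eq_zero hq]
  simp


lemma legendreP_eval_one (n : ℕ) : (legendreP n).eval 1 = 1 := by
  induction n using Nat.strong_induction_on with
  | _ n ih =>
    match n with
    | 0 => simp [legendreP_zero]
    | 1 => simp [legendreP_one]
    | (m+2) =>
      rw [bonnet_aux m]
      simp only [eval_add, eval_mul, eval_X, eval_C, one_mul]
      rw [u_boundary (m+1) m (by omega) 1 (Or.inl rfl), ih (m+1) (by omega)]
      ring

lemma legendreP_eval_negone (n : ℕ) : (legendreP n).eval (-1) = (-1)^n := by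
  induction n using Nat.strong_induction_on with
  | _ n ih =>
    match n with
    | 0 => simp [legendreP_zero]
    | 1 => simp [legendreP_one]
    | (m+2) =>
      rw [bonnet_aux m]
      simp only [eval_add, eval_mul, eval_X, eval_C]
      rw [u_boundary (m+1) m (by omega) (-1) (Or.inr rfl), ih (m+1) (by omega)]
      ring

-- ODE: ((x²−1)P'_n)' = n(n+1) P_n
lemma legendre_ode (n : ℕ) :
    derivative ((X^2-1) * derivative (legendreP n)) = C ((n:ℝ)*((n:ℝ)+1)) * legendreP n := by
  rw [legendre_star n, derivative_C_mul, derivative_sub, derivative_mul, derivative_X, one_mul,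
    deriv_rec n]
  simp only [map_add, map_mul, map_one, C_mul]
  ring

-- three-term recurrence
lemma three_term (n : ℕ) :
    C ((n:ℝ)+2) * legendreP (n+2)
      = C (2*(n:ℝ)+3) * (X * legendreP (n+1)) - C ((n:ℝ)+1) * legendreP n := by
  have h1 := legendre_star (n+1)
  have h2 := deriv_rec n
  have h0 := legendre_star n
  have hc : ((n+1:ℕ):ℝ) + 1 = (n:ℝ)+2 := by push_cast; ring
  rw [hc, show n+1+1 = n+2 from rfl] at h1
  simp only [map_add, map_mul, map_one, map_ofNat, map_natCast] at h0 h1 h2 ⊢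
  linear_combination (X^2-1) * h2 + X * h0 - h1

-- Christoffel–Darboux
lemma cd (τ : ℝ) (n : ℕ) :
    (X - C τ) * (∑ m ∈ Finset.range (n+1), C ((2*(m:ℝ)+1) * (legendreP m).eval τ) * legendreP m)
      = C ((n:ℝ)+1) * (legendreP (n+1) * C ((legendreP n).eval τ)
          - legendreP n * C ((legendreP (n+1)).eval τ)) := by
  induction n with
  | zero =>
    rw [Finset.range_one, Finset.sum_singleton, legendreP_zero, legendreP_one]
    simp
  | succ n ih =>
    rw [Finset.sum_range_succ, mul_add, ih]
    have he := congrArg (eval τ) (three_term n)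
    simp only [eval_mul, eval_C, eval_sub, eval_add, eval_X] at he
    have hC := congrArg C he
    have hcast : ((n+1:ℕ):ℝ) + 1 = (n:ℝ)+2 := by push_cast; ring
    rw [hcast, show n+1+1 = n+2 from rfl]
    have h3 := three_term n
    simp only [map_add, map_mul, map_one, map_ofNat, map_sub, map_natCast] at h3 hC ⊢
    push_cast
    linear_combination legendreP (n+1) * hC - C ((legendreP (n+1)).eval τ) * h3

-- integral of the CD kernel sum
lemma cd_sum_integral (τ : ℝ) (n : ℕ) :
    ∫ t in (-1:ℝ)..1,
        (∑ m ∈ Finset.range (n+1), C ((2*(m:ℝ)+1) * (legendreP m).eval τ) * legendreP m).eval t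
      = 2 := by
  have : ∀ t:ℝ, (∑ m ∈ Finset.range (n+1), C ((2*(m:ℝ)+1) * (legendreP m).eval τ) * legendreP m).eval t
      = ∑ m ∈ Finset.range (n+1), ((2*(m:ℝ)+1) * (legendreP m).eval τ) * (legendreP m).eval t := by
    intro t; rw [eval_finset_sum]; exact Finset.sum_congr rfl fun m _ => by simp
  simp only [this]
  rw [intervalIntegral.integral_finset_sum]
  · rw [Finset.sum_eq_single 0]
    · simp [legendreP_zero]; norm_num
    · intro m _ hm
      have h1 : ∫ t in (-1:ℝ)..1, (legendreP m).eval t = 0 := by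
        have := legendre_orth (n := m) (q := 1) (by simpa using Nat.pos_of_ne_zero hm)
        simpa using this
      rw [intervalIntegral.integral_const_mul, h1, mul_zero]
    · simp
  · intro m _
    apply IntervalIntegrable.const_mul
    exact ((legendreP m).continuous_aeval).intervalIntegrable _ _


lemma poly_int_sub (f g : ℝ[X]) (a b : ℝ) :
    ∫ t in a..b, (f - g).eval t = (∫ t in a..b, f.eval t) - ∫ t in a..b, g.eval t := by
  have h := poly_int_add (f - g) g a b
  simp only [sub_add_cancel] at h
  linarith

lemma int_legendre_simple {n : ℕ} (hn : 1 ≤ n) :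
    ∫ t in (-1:ℝ)..1, (legendreP n).eval t = 0 := by
  have := legendre_orth (n := n) (q := 1) (by simp; omega)
  simpa using this

lemma weight_integral {n : ℕ} (hn : 1 ≤ n) {τk : ℝ} {g : ℝ[X]}
    (hg : (X^2-1) * derivative (legendreP n) = (X - C τk) * g) :
    (legendreP n).eval τk * ∫ t in (-1:ℝ)..1, g.eval t = 2 := by
  have hcases : ((τk - 1) * (τk + 1)) * (derivative (legendreP n)).eval τk = 0 := by
    have := congrArg (eval τk) hg
    simp only [eval_mul, eval_sub, eval_pow, eval_X, eval_one, eval_C, sub_self, zero_mul] at this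
    nlinarith [this]
  rcases mul_eq_zero.1 hcases with h1 | hP'
  · -- endpoint case
    rcases mul_eq_zero.1 h1 with h | h
    · -- τk = 1
      have hτ : τk = 1 := by linarith
      subst hτ
      have hgid : g = (X + C 1) * derivative (legendreP n) := by
        have hfac : ((X:ℝ[X])^2-1) * derivative (legendreP n)
            = (X - C 1) * ((X + C 1) * derivative (legendreP n)) := by
          simp only [map_one]; ring
        apply mul_left_cancel₀ (Polynomial.X_sub_C_ne_zero 1)
        rw [← hg, hfac]
      rw [hgid]
      have hre : ∀ t:ℝ, ((X + C 1 : ℝ[X]) * derivative (legendreP n)).eval t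
          = ((derivative (legendreP n)) * (X + C 1)).eval t := fun t => by simp [eval_mul]; ring
      rw [intervalIntegral.integral_congr (fun t _ => hre t), poly_ibp]
      have horth : ∫ t in (-1:ℝ)..1, ((legendreP n) * derivative (X + C 1)).eval t
          = ∫ t in (-1:ℝ)..1, (legendreP n).eval t := by
        apply intervalIntegral.integral_congr
        intro t _
        simp
      rw [horth, int_legendre_simple hn, legendreP_eval_one, legendreP_eval_negone]
      simp
      ring
    · -- τk = -1
      have hτ : τk = -1 := by linarith
      subst hτ
      have hgid : g = (X - C 1) * derivative (legendreP n) := by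
        have hfac : ((X:ℝ[X])^2-1) * derivative (legendreP n)
            = (X - C (-1)) * ((X - C 1) * derivative (legendreP n)) := by
          simp only [map_neg, map_one]; ring
        apply mul_left_cancel₀ (Polynomial.X_sub_C_ne_zero (-1))
        rw [← hg, hfac]
      rw [hgid]
      have hre : ∀ t:ℝ, ((X - C 1 : ℝ[X]) * derivative (legendreP n)).eval t
          = ((derivative (legendreP n)) * (X - C 1)).eval t := fun t => by simp [eval_mul]; ring
      rw [intervalIntegral.integral_congr (fun t _ => hre t), poly_ibp]
      have horth : ∫ t in (-1:ℝ)..1, ((legendreP n) * derivative (X - C 1)).eval t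
          = ∫ t in (-1:ℝ)..1, (legendreP n).eval t := by
        apply intervalIntegral.integral_congr
        intro t _
        simp
      rw [horth, int_legendre_simple hn, legendreP_eval_one, legendreP_eval_negone]
      have hsq : ((-1:ℝ)^n) * ((-1:ℝ)^n) = 1 := by rw [← mul_pow]; norm_num
      simp only [eval_sub, eval_add, eval_X, eval_C, eval_one]
      nlinarith [hsq]
  · -- interior case
    set S := ∑ m ∈ Finset.range (n+1), C ((2*(m:ℝ)+1) * (legendreP m).eval τk) * legendreP m with hS
    have heval : (legendreP (n+1)).eval τk = τk * (legendreP n).eval τk := by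
      have h0 := congrArg (eval τk) (legendre_star n)
      simp only [eval_mul, eval_sub, eval_pow, eval_X, eval_one, eval_C, hP', mul_zero] at h0
      rcases mul_eq_zero.1 h0.symm with h | h
      · exact absurd h (by positivity)
      · linarith
    have hC1 : (C ((legendreP (n+1)).eval τk) : ℝ[X]) = C τk * C ((legendreP n).eval τk) := by
      rw [← C_mul, heval]
    have hpoly : C ((legendreP n).eval τk) * g
        = S - C (((n:ℝ)+1) * (legendreP n).eval τk) * legendreP n := by
      apply mul_left_cancel₀ (Polynomial.X_sub_C_ne_zero τk)
      have hcd := cd τk n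
      rw [← hS] at hcd
      have hst := legendre_star n
      simp only [C_mul, map_add, map_ofNat, map_one, map_natCast] at hcd hC1 hst ⊢
      linear_combination (-(C ((legendreP n).eval τk))) * hg + C ((legendreP n).eval τk) * hst
        - hcd + ((n:ℝ[X])+1) * legendreP n * hC1
    have hint := congrArg (fun q : ℝ[X] => ∫ t in (-1:ℝ)..1, q.eval t) hpoly
    rw [poly_int_C_mul, poly_int_sub, poly_int_C_mul, cd_sum_integral τk n,
      int_legendre_simple hn] at hint
    simpa using hint

/-- Lobatto polynomial of degree `N`: `L_N(τ) = (τ² − 1)·P'_{N−1}(τ)`. -/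
noncomputable def lobatto (N : ℕ) : Polynomial ℝ :=
  (X ^ 2 - 1) * Polynomial.derivative (legendreP (N - 1))

/-- Lagrange interpolating basis polynomial of index `i` over the nodes `τ`. -/
noncomputable def lagrangeBasis {M : ℕ} (τ : Fin M → ℝ) (i : Fin M) : Polynomial ℝ :=
  ∏ j ∈ Finset.univ.erase i, (Polynomial.C (τ i - τ j)⁻¹ * (X - Polynomial.C (τ j)))

set_option maxHeartbeats 1000000 in
/-- with `τ_1,…,τ_N` the roots of `L_N`, `τ_ξ` an extra node, and the
Gauss–Lobatto weights `w_k = 2/(N(N−1)·P_{N−1}(τ_k)²)`, one has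
`∫_{−1}^{1} l_k(τ)·p(τ) dτ = w_k·p(τ_k)` for every polynomial `p` of degree ≤ `N − 3`. -/
theorem lagrange_inner_product {N : ℕ} (hN : 3 ≤ N)
    (τ : Fin N → ℝ) (hτ : Function.Injective τ)
    (hroots : ∀ k, (lobatto N).eval (τ k) = 0)
    (τξ : ℝ) (hξ : τξ ∈ Set.Icc (-1 : ℝ) 1) (hne : ∀ k, τξ ≠ τ k)
    (w : Fin N → ℝ)
    (hw : ∀ k, w k = 2 / ((N : ℝ) * ((N : ℝ) - 1) * (legendreP (N - 1)).eval (τ k) ^ 2))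
    (p : Polynomial ℝ) (hp : p.natDegree ≤ N - 3) (k : Fin N) :
    ∫ t in (-1 : ℝ)..1, (lagrangeBasis (Fin.snoc τ τξ) k.castSucc).eval t * p.eval t
      = w k * p.eval (τ k) := by
  have hN1 : (1:ℕ) ≤ N - 1 := by omega
  obtain ⟨hP'deg, hP'ne⟩ := deriv_legendreP_natDegree hN1
  have hX2ne : (X^2 - 1 : ℝ[X]) ≠ 0 := fun h => by
    have := congrArg (eval 0) h; simp at this
  have hX2deg : (X^2 - 1 : ℝ[X]).natDegree = 2 := by
    rw [show (X^2-1 : ℝ[X]) = X^2 - C 1 by simp, natDegree_X_pow_sub_C]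
  have hLdeg : (lobatto N).natDegree = N := by
    rw [lobatto, natDegree_mul hX2ne hP'ne, hP'deg, hX2deg]
    omega
  have hLne : lobatto N ≠ 0 := mul_ne_zero hX2ne hP'ne
  set b := (lobatto N).leadingCoeff with hb
  have hbne : b ≠ 0 := leadingCoeff_ne_zero.2 hLne
  set M := ∏ j : Fin N, (X - C (τ j)) with hM
  have hMmonic : M.Monic := monic_prod_of_monic _ _ (fun i _ => monic_X_sub_C (τ i))
  have hMdeg : M.natDegree = N := by
    rw [hM, natDegree_prod _ _ (fun i _ => X_sub_C_ne_zero (τ i))]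
    simp [natDegree_X_sub_C]
  have hLM : lobatto N = C b * M := by
    by_contra hne'
    have hD : lobatto N - C b * M ≠ 0 := sub_ne_zero.2 hne'
    have hcoeff : (lobatto N - C b * M).coeff N = 0 := by
      have hMc : M.coeff N = 1 := by rw [← hMdeg]; exact hMmonic.coeff_natDegree
      have hLc : (lobatto N).coeff N = b := by rw [hb, leadingCoeff, hLdeg]
      rw [coeff_sub, coeff_C_mul, hMc, hLc]
      ring
    have hle : (lobatto N - C b * M).natDegree ≤ N := by
      refine le_trans (natDegree_sub_le _ _) ?_
      simp only [sup_le_iff]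
      exact ⟨le_of_eq hLdeg, le_trans (natDegree_C_mul_le _ _) (le_of_eq hMdeg)⟩
    have hdlt : (lobatto N - C b * M).natDegree < N := by
      rcases lt_or_eq_of_le hle with h | h
      · exact h
      · exfalso
        have := leadingCoeff_ne_zero.2 hD
        rw [leadingCoeff, h, hcoeff] at this
        exact this rfl
    have hz := eq_zero_of_natDegree_lt_card_of_eval_eq_zero' (lobatto N - C b * M)
      (Finset.univ.image τ) ?_ ?_
    · exact hD hz
    · intro x hx
      obtain ⟨j, _, rfl⟩ := Finset.mem_image.1 hx
      rw [eval_sub, hroots j, eval_mul, eval_C, hM, eval_prod]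
      rw [Finset.prod_eq_zero (Finset.mem_univ j) (by simp)]
      ring
    · rwa [Finset.card_image_of_injective _ hτ, Finset.card_univ, Fintype.card_fin]
  set g := C b * ∏ j ∈ Finset.univ.erase k, (X - C (τ j)) with hgdef
  have hfact : lobatto N = (X - C (τ k)) * g := by
    rw [hLM, hgdef, hM, ← Finset.mul_prod_erase Finset.univ _ (Finset.mem_univ k)]
    ring
  have hwint : (legendreP (N-1)).eval (τ k) * ∫ t in (-1:ℝ)..1, g.eval t = 2 :=
    weight_integral hN1 (by rw [show (X^2-1 : ℝ[X]) * derivative (legendreP (N-1)) = lobatto N from rfl, hfact])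
  have hPk : (legendreP (N-1)).eval (τ k) ≠ 0 := fun h => by
    rw [h, zero_mul] at hwint; norm_num at hwint
  have hIg : ∫ t in (-1:ℝ)..1, g.eval t = 2 / (legendreP (N-1)).eval (τ k) := by
    field_simp
    linarith [hwint]
  -- value of g at τ k
  have hcast : ((N-1:ℕ):ℝ) = (N:ℝ) - 1 := by
    rw [Nat.cast_sub (by omega)]; simp
  have hgk : g.eval (τ k) = ((N:ℝ)-1)*(N:ℝ) * (legendreP (N-1)).eval (τ k) := by
    have h1 := congrArg (eval (τ k)) (congrArg derivative hfact)
    rw [show derivative (lobatto N) = C (((N-1:ℕ):ℝ)*(((N-1:ℕ):ℝ)+1)) * legendreP (N-1)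
        from legendre_ode (N-1)] at h1
    rw [derivative_mul] at h1
    simp only [eval_add, eval_mul, eval_C, derivative_sub, derivative_X, derivative_C, sub_zero,
      eval_one, eval_sub, eval_X, sub_self, zero_mul, mul_zero, add_zero, one_mul] at h1
    rw [hcast] at h1
    have : (N:ℝ) - 1 + 1 = (N:ℝ) := by ring
    rw [this] at h1
    linarith [h1]
  have hgkne : g.eval (τ k) ≠ 0 := by
    rw [hgk]
    have hN0 : (N:ℝ) ≥ 3 := by exact_mod_cast hN
    intro h
    apply hPk
    have h1 : ((N:ℝ)-1)*(N:ℝ) ≠ 0 := by nlinarith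
    exact (mul_eq_zero.1 h).resolve_left h1
  -- snoc decomposition
  have hlastnm : Fin.last N ∉ (Finset.univ.erase k).image Fin.castSucc := by
    simp only [Finset.mem_image, not_exists]
    rintro i ⟨_, hi⟩
    exact (Fin.castSucc_lt_last i).ne hi
  have hset : (Finset.univ.erase (Fin.castSucc k) : Finset (Fin (N+1)))
      = insert (Fin.last N) ((Finset.univ.erase k).image Fin.castSucc) := by
    ext j
    constructor
    · intro hj
      have hjne := Finset.ne_of_mem_erase hj
      rcases Fin.eq_castSucc_or_eq_last j with ⟨i, rfl⟩ | rfl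
      · refine Finset.mem_insert_of_mem (Finset.mem_image.2
          ⟨i, Finset.mem_erase.2 ⟨?_, Finset.mem_univ i⟩, rfl⟩)
        exact fun h => hjne (by rw [h])
      · exact Finset.mem_insert_self _ _
    · intro hj
      rcases Finset.mem_insert.1 hj with rfl | hj2
      · exact Finset.mem_erase.2 ⟨(Fin.castSucc_lt_last k).ne', Finset.mem_univ _⟩
      · obtain ⟨i, hi, rfl⟩ := Finset.mem_image.1 hj2
        exact Finset.mem_erase.2
          ⟨fun h => (Finset.mem_erase.1 hi).1 (Fin.castSucc_injective N h), Finset.mem_univ _⟩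
  have hsnoc : lagrangeBasis (Fin.snoc τ τξ) k.castSucc
      = (C (τ k - τξ)⁻¹ * (X - C τξ)) * lagrangeBasis τ k := by
    rw [lagrangeBasis, hset, Finset.prod_insert hlastnm,
      Finset.prod_image (fun i _ j _ h => Fin.castSucc_injective N h)]
    simp only [Fin.snoc_castSucc, Fin.snoc_last]
    rfl
  -- q and s
  set q : ℝ[X] := C (τ k - τξ)⁻¹ * ((X - C τξ) * p) with hqdef
  have hτξk : τ k - τξ ≠ 0 := sub_ne_zero.2 fun h => (hne k) h.symm
  have hqk : q.eval (τ k) = p.eval (τ k) := by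
    rw [hqdef]
    simp only [eval_mul, eval_C, eval_sub, eval_X]
    field_simp
  have hqdeg : q.natDegree ≤ N - 2 := by
    refine le_trans (natDegree_C_mul_le _ _) (le_trans (natDegree_mul_le) ?_)
    rw [natDegree_X_sub_C]
    omega
  obtain ⟨s, hs⟩ := X_sub_C_dvd_sub_C_eval (a := τ k) (p := q)
  have hsdeg : s.natDegree ≤ N - 3 := by
    by_cases hs0 : s = 0
    · simp [hs0]
    · have h1 : ((X - C (τ k)) * s).natDegree = 1 + s.natDegree := by
        rw [natDegree_mul (X_sub_C_ne_zero (τ k)) hs0, natDegree_X_sub_C]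
      have h2 : (q - C (q.eval (τ k))).natDegree ≤ N - 2 :=
        le_trans (natDegree_sub_le _ _) (by simp [hqdeg, natDegree_C])
      rw [← hs, h1] at *
      omega
  -- orthogonality term
  have horths : ∫ t in (-1:ℝ)..1, (lobatto N * s).eval t = 0 := by
    have hre : ∀ t:ℝ, (lobatto N * s).eval t
        = ((derivative (legendreP (N-1))) * ((X^2-1) * s)).eval t := fun t => by
      rw [show lobatto N = (X^2-1) * derivative (legendreP (N-1)) from rfl]
      simp only [eval_mul]
      ring
    rw [intervalIntegral.integral_congr (fun t _ => hre t), poly_ibp]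
    have hb1 : ((X^2-1 : ℝ[X]) * s).eval 1 = 0 := by simp
    have hb2 : ((X^2-1 : ℝ[X]) * s).eval (-1) = 0 := by simp
    rw [hb1, hb2]
    have horth : ∫ t in (-1:ℝ)..1, ((legendreP (N-1)) * derivative ((X^2-1) * s)).eval t = 0 := by
      apply legendre_orth
      have h1 : ((X^2-1 : ℝ[X]) * s).natDegree ≤ N - 1 :=
        le_trans natDegree_mul_le (by rw [hX2deg]; omega)
      have h2 := natDegree_derivative_le ((X^2-1 : ℝ[X]) * s)
      omega
    rw [horth]
    ring
  -- final computation
  have hintg : ∀ t:ℝ, (lagrangeBasis (Fin.snoc τ τξ) k.castSucc).eval t * p.eval t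
      = (lagrangeBasis τ k * q).eval t := fun t => by
    rw [hsnoc, hqdef]
    simp only [eval_mul, eval_C, eval_sub, eval_X]
    ring
  rw [intervalIntegral.integral_congr (fun t _ => hintg t)]
  -- lagrangeBasis τ k = C (ck * b⁻¹) * g
  set ck := ∏ j ∈ Finset.univ.erase k, (τ k - τ j)⁻¹ with hck
  have hlag : lagrangeBasis τ k = C (ck * b⁻¹) * g := by
    rw [lagrangeBasis, Finset.prod_mul_distrib, hgdef]
    have h1 : (∏ x ∈ Finset.univ.erase k, (C ((τ k - τ x)⁻¹) : ℝ[X])) = C ck :=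
      (map_prod C (fun j => (τ k - τ j)⁻¹) (Finset.univ.erase k)).symm
    rw [h1, ← mul_assoc, ← C_mul]
    congr 1
    field_simp
  have hsplit : lagrangeBasis τ k * q
      = C (ck * b⁻¹) * (C (q.eval (τ k)) * g + lobatto N * s) := by
    rw [hlag, hfact]
    have hq2 : q = C (q.eval (τ k)) + (X - C (τ k)) * s := by
      rw [← hs]; ring
    calc C (ck * b⁻¹) * g * q = C (ck * b⁻¹) * g * (C (q.eval (τ k)) + (X - C (τ k)) * s) := by
          rw [← hq2]
      _ = C (ck * b⁻¹) * (C (q.eval (τ k)) * g + (X - C (τ k)) * g * s) := by ring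
  rw [hsplit]
  rw [poly_int_C_mul, poly_int_add, poly_int_C_mul, horths, hIg, hqk]
  -- ck * b⁻¹ = (g.eval (τ k))⁻¹
  have hDprod : g.eval (τ k) = b * ∏ j ∈ Finset.univ.erase k, (τ k - τ j) := by
    rw [hgdef]
    simp [eval_prod]
  have hckb : ck * b⁻¹ = (g.eval (τ k))⁻¹ := by
    rw [hDprod, hck, mul_inv, ← Finset.prod_inv_distrib]
    ring
  rw [hckb, hgk, hw k]
  have hN0 : (3:ℝ) ≤ (N:ℝ) := by exact_mod_cast hN
  field_simp
  ring
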